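/- Let (O, X) be jointly distributed random variables on finite alphabets 𝒪 and 𝒳, and let M ∈ ℕ. Consider the maximization of I(O; Y) over all conditional distributions p_{Y|X} from 𝒳 to the alphabet [M], where Y is generated from X through p_{Y|X} so that O — X — Y form a Markov chain. Then the maximum is attained by a deterministic mapping, i.e., there exists a function g : 𝒳 → [M] such that Y = g(X) achieves I(O; g(X)) ≥ I(O; Y') for every Y' obtained from X via any conditional distribution p_{Y'|X} with alphabet [M]. -/

import Mathlib

open Classical

/-- Shannon mutual information `I(A; B)` of a joint PMF `J` on `A × B`. -/
noncomputable def mutInf {A B : Type*} [Fintype A] [Fintype B] (J : A → B → ℝ) : ℝ :=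
  ∑ a, ∑ b, J a b * Real.log (J a b / ((∑ b', J a b') * (∑ a', J a' b)))

section Aux

open Finset

lemma log_sum_ineq {ι : Type*} (s : Finset ι) (a b : ι → ℝ)
    (ha : ∀ i ∈ s, 0 ≤ a i) (hb : ∀ i ∈ s, 0 ≤ b i)
    (hab : ∀ i ∈ s, b i = 0 → a i = 0) :
    (∑ i ∈ s, a i) * Real.log ((∑ i ∈ s, a i) / (∑ i ∈ s, b i))
      ≤ ∑ i ∈ s, a i * Real.log (a i / b i) := by
  set A := ∑ i ∈ s, a i with hA
  set B := ∑ i ∈ s, b i with hB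
  rcases eq_or_lt_of_le (Finset.sum_nonneg ha) with h0 | hApos
  · -- A = 0, hence all a i = 0
    have hz : ∀ i ∈ s, a i = 0 := by
      intro i hi
      have := (Finset.sum_eq_zero_iff_of_nonneg ha).1 h0.symm
      exact this i hi
    have hA0 : A = 0 := h0.symm
    rw [hA0, zero_mul]
    apply Finset.sum_nonneg
    intro i hi; rw [hz i hi]; simp
  · -- A > 0
    have hBpos : 0 < B := by
      obtain ⟨i, hi, hai⟩ : ∃ i ∈ s, a i ≠ 0 := by
        by_contra h
        push_neg at h
        have : A = 0 := Finset.sum_eq_zero h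
        linarith
      have hbi : 0 < b i := by
        rcases eq_or_lt_of_le (hb i hi) with h | h
        · exact absurd (hab i hi h.symm) hai
        · exact h
      calc 0 < b i := hbi
        _ ≤ B := Finset.single_le_sum hb hi
    have key : ∀ i ∈ s, a i * Real.log (A / B) + a i - b i * (A / B)
        ≤ a i * Real.log (a i / b i) := by
      intro i hi
      rcases eq_or_lt_of_le (ha i hi) with h0 | hai
      · rw [← h0]
        have : 0 ≤ b i * (A / B) := mul_nonneg (hb i hi) (le_of_lt (div_pos hApos hBpos))
        simp; linarith
      · have hbi : 0 < b i := by
          rcases eq_or_lt_of_le (hb i hi) with h | h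
          · exact absurd (hab i hi h.symm) hai.ne'
          · exact h
        set t : ℝ := (a i / b i) / (A / B) with ht
        have htpos : 0 < t := div_pos (div_pos hai hbi) (div_pos hApos hBpos)
        have hlog : 1 - t⁻¹ ≤ Real.log t := by
          have := Real.log_le_sub_one_of_pos (inv_pos.2 htpos)
          rw [Real.log_inv] at this
          linarith
        have hlt : Real.log t = Real.log (a i / b i) - Real.log (A / B) := by
          rw [ht, Real.log_div (ne_of_gt (div_pos hai hbi)) (ne_of_gt (div_pos hApos hBpos))]
        have hti : a i * t⁻¹ = b i * (A / B) := by
          rw [ht]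
          field_simp
        have := mul_le_mul_of_nonneg_left hlog (le_of_lt hai)
        rw [mul_sub, mul_one, hti, hlt, mul_sub] at this
        linarith
    calc A * Real.log (A / B) = ∑ i ∈ s, (a i * Real.log (A / B) + a i - b i * (A / B)) := by
          rw [Finset.sum_sub_distrib, Finset.sum_add_distrib, ← Finset.sum_mul, ← Finset.sum_mul,
            ← hA, ← hB]
          field_simp
          ring
      _ ≤ ∑ i ∈ s, a i * Real.log (a i / b i) := Finset.sum_le_sum key


lemma mutInf_mixture_le {ι O Y : Type*} [Fintype ι] [Fintype O] [Fintype Y]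
    (w : ι → ℝ) (hw : ∀ i, 0 ≤ w i) (hw1 : ∑ i, w i = 1)
    (J : ι → O → Y → ℝ) (hJ : ∀ i o y, 0 ≤ J i o y)
    (pO : O → ℝ) (hm : ∀ i o, ∑ y, J i o y = pO o) :
    mutInf (fun o y => ∑ i, w i * J i o y) ≤ ∑ i, w i * mutInf (J i) := by
  classical
  have hι : Nonempty ι := by
    by_contra h
    rw [not_nonempty_iff] at h
    rw [Finset.univ_eq_empty, Finset.sum_empty] at hw1
    norm_num at hw1
  obtain ⟨i₀⟩ := hι
  have hpO : ∀ o, 0 ≤ pO o := fun o => (hm i₀ o) ▸ Finset.sum_nonneg (fun y _ => hJ i₀ o y)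
  unfold mutInf
  have hRHS : ∑ i, w i * (∑ o, ∑ y, J i o y *
        Real.log (J i o y / ((∑ y', J i o y') * (∑ o', J i o' y))))
      = ∑ o : O, ∑ y : Y, ∑ i, w i * (J i o y *
          Real.log (J i o y / (pO o * (∑ o', J i o' y)))) := by
    simp_rw [hm, Finset.mul_sum]
    rw [Finset.sum_comm]
    exact Finset.sum_congr rfl fun o _ => Finset.sum_comm
  rw [hRHS]
  refine Finset.sum_le_sum fun o _ => Finset.sum_le_sum fun y _ => ?_
  have h1 : ∑ y' : Y, ∑ i, w i * J i o y' = pO o := by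
    rw [Finset.sum_comm]
    simp_rw [← Finset.mul_sum, hm]
    rw [← Finset.sum_mul, hw1, one_mul]
  have h2 : ∑ o' : O, ∑ i, w i * J i o' y = ∑ i, w i * (∑ o', J i o' y) := by
    rw [Finset.sum_comm]
    simp_rw [Finset.mul_sum]
  rw [h1, h2]
  set a : ι → ℝ := fun i => w i * J i o y with ha_def
  set b : ι → ℝ := fun i => w i * (pO o * (∑ o', J i o' y)) with hb_def
  have hsum_b : pO o * (∑ i, w i * (∑ o', J i o' y)) = ∑ i, b i := by
    rw [Finset.mul_sum]
    exact Finset.sum_congr rfl fun i _ => by rw [hb_def]; ring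
  rw [hsum_b]
  have hJle1 : ∀ i, J i o y ≤ pO o := fun i =>
    (hm i o) ▸ Finset.single_le_sum (fun y' _ => hJ i o y') (Finset.mem_univ y)
  have hJle2 : ∀ i, J i o y ≤ ∑ o', J i o' y := fun i =>
    Finset.single_le_sum (fun o' _ => hJ i o' y) (Finset.mem_univ o)
  have key := log_sum_ineq Finset.univ a b
    (fun i _ => mul_nonneg (hw i) (hJ i o y))
    (fun i _ => mul_nonneg (hw i) (mul_nonneg (hpO o)
      (Finset.sum_nonneg fun o' _ => hJ i o' y)))
    (fun i _ hbi => by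
      rw [hb_def] at hbi
      rcases mul_eq_zero.1 hbi with hwi | hpm
      · rw [ha_def]; simp [hwi]
      · rcases mul_eq_zero.1 hpm with hp0 | hm0
        · have : J i o y = 0 := le_antisymm (hp0 ▸ hJle1 i) (hJ i o y)
          rw [ha_def]; simp [this]
        · have : J i o y = 0 := le_antisymm (hm0 ▸ hJle2 i) (hJ i o y)
          rw [ha_def]; simp [this])
  refine key.trans (le_of_eq (Finset.sum_congr rfl fun i _ => ?_))
  rcases eq_or_lt_of_le (hw i) with hwi | hwi
  · simp only [ha_def, hb_def, ← hwi, zero_mul]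
  · rw [ha_def, hb_def]
    have : (w i * J i o y) / (w i * (pO o * (∑ o', J i o' y)))
        = J i o y / (pO o * (∑ o', J i o' y)) := mul_div_mul_left _ _ (ne_of_gt hwi)
    rw [this]; ring

end Aux

/-- For jointly distributed `(O, X)` on finite alphabets and `M ≥ 1`, the
maximum of `I(O; Y)` over all channels `p_{Y|X}` from `𝒳` to `[M]` (so that `O — X — Y` is
a Markov chain) is attained by a deterministic mapping `g : 𝒳 → [M]`. -/
theorem deterministic_channel_maximizes_mutual_information
    {O X : Type*} [Fintype O] [Fintype X]
    (M : ℕ) (hM : 0 < M)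
    (p : O → X → ℝ) (hp : ∀ o x, 0 ≤ p o x) (hps : ∑ o, ∑ x, p o x = 1) :
    ∃ g : X → Fin M,
      ∀ c : X → Fin M → ℝ, (∀ x y, 0 ≤ c x y) → (∀ x, ∑ y, c x y = 1) →
        mutInf (fun (o : O) (y : Fin M) => ∑ x, p o x * c x y)
          ≤ mutInf (fun (o : O) (y : Fin M) =>
              ∑ x, p o x * (if g x = y then 1 else 0)) := by
  classical
  haveI : Nonempty (Fin M) := ⟨⟨0, hM⟩⟩
  set J : (X → Fin M) → O → Fin M → ℝ :=
    fun f o y => ∑ x, p o x * (if f x = y then 1 else 0) with hJdef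
  obtain ⟨g, hg⟩ := Finite.exists_max (fun f : X → Fin M => mutInf (J f))
  refine ⟨g, fun c hc hc1 => ?_⟩
  set pO : O → ℝ := fun o => ∑ x, p o x with hpOdef
  set w : (X → Fin M) → ℝ := fun f => ∏ x, c x (f x) with hwdef
  have hw : ∀ f, 0 ≤ w f := fun f => Finset.prod_nonneg fun x _ => hc x (f x)
  have hw1 : ∑ f, w f = 1 := by
    rw [hwdef, ← Fintype.piFinset_univ, ← Finset.prod_univ_sum]
    simp [hc1]
  have hdecomp : ∀ x y, ∑ f : X → Fin M, w f * (if f x = y then 1 else 0) = c x y := by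
    intro x y
    set h : X → Fin M → ℝ :=
      fun x' z => if x' = x then (if z = y then c x z else 0) else c x' z with hhdef
    have hh : ∀ x' z, h x' z
        = c x' z * (if x' = x then (if z = y then (1:ℝ) else 0) else 1) := by
      intro x' z
      by_cases h1 : x' = x <;> by_cases h2 : z = y <;> simp [hhdef, h1, h2]
    calc ∑ f : X → Fin M, w f * (if f x = y then 1 else 0)
        = ∑ f : X → Fin M, ∏ x', h x' (f x') := by
          refine Finset.sum_congr rfl fun f _ => ?_
          simp_rw [hh]
          rw [Finset.prod_mul_distrib, Finset.prod_ite_eq']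
          simp [hwdef]
      _ = ∏ x', ∑ z, h x' z := by
          rw [← Fintype.piFinset_univ, ← Finset.prod_univ_sum]
      _ = c x y := by
          have hz : ∀ x', ∑ z, h x' z = if x' = x then c x y else 1 := by
            intro x'
            by_cases h1 : x' = x
            · simp [hhdef, h1, Finset.sum_ite_eq']
            · simp [hhdef, h1, hc1 x']
          simp_rw [hz]
          rw [Finset.prod_ite_eq']
          simp
  have hmix : (fun (o : O) (y : Fin M) => ∑ x, p o x * c x y)
      = fun o y => ∑ f, w f * J f o y := by
    funext o y
    simp_rw [hJdef, Finset.mul_sum]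
    rw [Finset.sum_comm]
    refine Finset.sum_congr rfl fun x _ => ?_
    rw [← hdecomp x y, Finset.mul_sum]
    exact Finset.sum_congr rfl fun f _ => by ring
  have hJnn : ∀ f o y, 0 ≤ J f o y := fun f o y =>
    Finset.sum_nonneg fun x _ => mul_nonneg (hp o x) (by positivity)
  have hmarg : ∀ f o, ∑ y, J f o y = pO o := by
    intro f o
    rw [hJdef, hpOdef]
    rw [Finset.sum_comm]
    refine Finset.sum_congr rfl fun x _ => ?_
    rw [← Finset.mul_sum]
    simp [Finset.sum_ite_eq]
  calc mutInf (fun (o : O) (y : Fin M) => ∑ x, p o x * c x y)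
      = mutInf (fun o y => ∑ f, w f * J f o y) := by rw [hmix]
    _ ≤ ∑ f, w f * mutInf (J f) := mutInf_mixture_le w hw hw1 J hJnn pO hmarg
    _ ≤ ∑ f, w f * mutInf (J g) :=
        Finset.sum_le_sum fun f _ => mul_le_mul_of_nonneg_left (hg f) (hw f)
    _ = mutInf (J g) := by rw [← Finset.sum_mul, hw1, one_mul]
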